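/- Let G be a relevant position of the game influence and let u, v ∈ V(G) be such that v ∈ V(G_u) (where u ∈ L(G) or u ∈ R(G)). Then Succ(G_u, v) = Succ(G, v) ∩ V(G_u) and Pred(G_u, v) = Pred(G, v) ∩ V(G_u). -/

import Mathlib

namespace Influence

open Finset

/-- A position of the game `influence`: a finite directed graph with vertex set `V`,
arc set `A`, and the set `left` of Left (black) vertices; Right's vertices are `V \ left`. -/
structure Pos (α : Type) [DecidableEq α] where
  V : Finset α
  A : Finset (α × α)
  left : Finset α

variable {α : Type} [DecidableEq α]

namespace Pos

/-- The set of Right vertices. -/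
def R (G : Pos α) : Finset α := G.V \ G.left

/-- Well-formedness: arcs join vertices, and Left vertices are vertices. -/
def WF (G : Pos α) : Prop :=
  (∀ p ∈ G.A, p.1 ∈ G.V ∧ p.2 ∈ G.V) ∧ G.left ⊆ G.V

open Classical in
/-- `Succ G x`: vertices reachable from `x` by a directed path (including `x` itself). -/
noncomputable def Succ (G : Pos α) (x : α) : Finset α :=
  G.V.filter (fun z => Relation.ReflTransGen (fun a b => (a, b) ∈ G.A) x z)

open Classical in
/-- `Pred G y`: vertices from which `y` is reachable by a directed path (including `y`). -/
noncomputable def Pred (G : Pos α) (y : α) : Finset α :=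
  G.V.filter (fun z => Relation.ReflTransGen (fun a b => (a, b) ∈ G.A) z y)

open Classical in
noncomputable def ForcL (G : Pos α) : Finset α :=
  G.left.filter (fun x => G.Succ x ⊆ G.left)

open Classical in
noncomputable def ForcR (G : Pos α) : Finset α :=
  G.R.filter (fun y => G.Pred y ⊆ G.R)

noncomputable def Forc (G : Pos α) : Finset α := G.ForcL ∪ G.ForcR

/-- A relevant position: no forced vertices. -/
def Relevant (G : Pos α) : Prop := G.Forc = ∅

/-- The induced subgraph `G ∖ S` on `V(G) \ S`. -/
def erase (G : Pos α) (S : Finset α) : Pos α :=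
  ⟨G.V \ S, G.A.filter (fun p => p.1 ∈ G.V \ S ∧ p.2 ∈ G.V \ S), G.left \ S⟩

open Classical in
/-- The set of vertices removed when playing `x`:  for `x ∈ L`,
`Rmv(G,x) = Succ(G,x) ∪ Forc(G ∖ Succ(G,x))`; for `y ∈ R`,
`Rmv(G,y) = Pred(G,y) ∪ Forc(G ∖ Pred(G,y))`. -/
noncomputable def Rmv (G : Pos α) (x : α) : Finset α :=
  if x ∈ G.left then G.Succ x ∪ (G.erase (G.Succ x)).Forc
  else G.Pred x ∪ (G.erase (G.Pred x)).Forc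

/-- The resulting relevant position `G_x` after the move `x`. -/
noncomputable def move (G : Pos α) (x : α) : Pos α := G.erase (G.Rmv x)

mutual
/-- Auxiliary (fuel-indexed) score of Left playing first. -/
noncomputable def sL1Aux : ℕ → Pos α → ℕ
  | 0, _ => 0
  | k + 1, G =>
      if G.left.Nonempty then
        G.left.sup (fun x => (G.Rmv x).card + sL2Aux k (G.move x))
      else 0

/-- Auxiliary (fuel-indexed) score of Left playing second. -/
noncomputable def sL2Aux : ℕ → Pos α → ℕ
  | 0, _ => 0
  | k + 1, G =>
      if h : G.R.Nonempty then G.R.inf' h (fun y => sL1Aux k (G.move y))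
      else 0
end

mutual
/-- Auxiliary (fuel-indexed) score of Right playing first. -/
noncomputable def sR1Aux : ℕ → Pos α → ℕ
  | 0, _ => 0
  | k + 1, G =>
      if G.R.Nonempty then
        G.R.sup (fun y => (G.Rmv y).card + sR2Aux k (G.move y))
      else 0

/-- Auxiliary (fuel-indexed) score of Right playing second. -/
noncomputable def sR2Aux : ℕ → Pos α → ℕ
  | 0, _ => 0
  | k + 1, G =>
      if h : G.left.Nonempty then G.left.inf' h (fun x => sR1Aux k (G.move x))
      else 0
end

/-- `s^L_1(G)`: the score of Left when Left plays first (optimal play). -/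
noncomputable def sL1 (G : Pos α) : ℕ := sL1Aux G.V.card G

/-- `s^L_2(G)`: the score of Left when Right plays first (optimal play). -/
noncomputable def sL2 (G : Pos α) : ℕ := sL2Aux G.V.card G

/-- `s^R_1(G)`: the score of Right when Right plays first (optimal play). -/
noncomputable def sR1 (G : Pos α) : ℕ := sR1Aux G.V.card G

/-- `s^R_2(G)`: the score of Right when Left plays first (optimal play). -/
noncomputable def sR2 (G : Pos α) : ℕ := sR2Aux G.V.card G

/-- The Left score `Ls(G) = s^L_1(G) - s^R_2(G)`. -/
noncomputable def Ls (G : Pos α) : ℤ := (G.sL1 : ℤ) - (G.sR2 : ℤ)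

/-- The Right score `Rs(G) = s^L_2(G) - s^R_1(G)`. -/
noncomputable def Rs (G : Pos α) : ℤ := (G.sL2 : ℤ) - (G.sR1 : ℤ)

/-- Disjoint union (game sum) of two positions. -/
def union (G G' : Pos α) : Pos α := ⟨G.V ∪ G'.V, G.A ∪ G'.A, G.left ∪ G'.left⟩

/-- The empty position. -/
protected def empty : Pos α := ⟨∅, ∅, ∅⟩

end Pos

/-- The sum of a finite list of positions. -/
def sumList (l : List (Pos α)) : Pos α := l.foldr Pos.union Pos.empty

open Classical in
/-- `G` is a segment: its vertex set is a set of at least two consecutive integers,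
Left's vertices are the even ones, Right's the odd ones, and there is an arc from each
even vertex to each of its (odd) neighbours `±1` lying in the vertex set. -/
def IsSegment (G : Pos ℤ) : Prop :=
  2 ≤ G.V.card ∧
  (∀ i j k : ℤ, i ∈ G.V → j ∈ G.V → i ≤ k → k ≤ j → k ∈ G.V) ∧
  G.left = G.V.filter (fun n => Even n) ∧
  G.A = (G.V ×ˢ G.V).filter (fun p => Even p.1 ∧ (p.2 = p.1 + 1 ∨ p.2 = p.1 - 1))

/-- `G` is the finite disjoint union (game sum) of the list `l` of segments. -/
def IsSegUnion (G : Pos ℤ) (l : List (Pos ℤ)) : Prop :=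
  (∀ H ∈ l, IsSegment H) ∧
  l.Pairwise (fun H H' => Disjoint H.V H'.V) ∧
  G = sumList l


open Classical in
/-- `G` is an alternated cycle: obtained from a segment `S` with an even number of
vertices by adding the arc `(x, y)` where `x` is the endpoint of `S` in `L` (even) and
`y` the endpoint in `R` (odd). -/
def IsAltCycle (G : Pos ℤ) : Prop :=
  ∃ (S : Pos ℤ) (x y : ℤ), IsSegment S ∧ Even S.V.card ∧
    x ∈ S.V ∧ y ∈ S.V ∧ Even x ∧ ¬ Even y ∧
    (∀ z ∈ S.V, min x y ≤ z ∧ z ≤ max x y) ∧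
    G.V = S.V ∧ G.left = S.left ∧ G.A = insert (x, y) S.A

open Classical in
/-- `T` is (a copy of) the oriented tree `T_n^c`: a rooted tree of depth `n+1`, all arcs
oriented from parent to child, in which every vertex at level `k ≤ n-1` has exactly `3`
children, every vertex at level `n` has exactly `c` children, the leaves (level `n+1`)
are the Right vertices and all other vertices are Left vertices. -/
def IsTnc (n c : ℕ) (T : Pos α) : Prop :=
  T.WF ∧ ∃ lvl : α → ℕ,
    (∀ v ∈ T.V, lvl v ≤ n + 1) ∧
    T.left = T.V.filter (fun v => lvl v ≤ n) ∧
    (∃! r, r ∈ T.V ∧ lvl r = 0) ∧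
    (∀ p ∈ T.A, lvl p.2 = lvl p.1 + 1) ∧
    (∀ v ∈ T.V, 0 < lvl v → ∃! u, (u, v) ∈ T.A) ∧
    (∀ v ∈ T.V, lvl v < n → (T.V.filter (fun w => (v, w) ∈ T.A)).card = 3) ∧
    (∀ v ∈ T.V, lvl v = n → (T.V.filter (fun w => (v, w) ∈ T.A)).card = c)

/-- `J` is (a copy of) `J_n^c`, the disjoint union of two disjoint copies of `T_n^c`. -/
def IsJnc (n c : ℕ) (J : Pos α) : Prop :=
  ∃ T1 T2 : Pos α, IsTnc n c T1 ∧ IsTnc n c T2 ∧ Disjoint T1.V T2.V ∧ J = T1.union T2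

end Influence

open Influence Influence.Pos Finset

section Aux

variable {α : Type} [DecidableEq α]

private lemma mem_erase_A {G : Pos α} {S : Finset α} {a b : α} :
    (a, b) ∈ (G.erase S).A ↔ (a, b) ∈ G.A ∧ (a ∈ G.V ∧ a ∉ S) ∧ (b ∈ G.V ∧ b ∉ S) := by
  simp [Pos.erase, Finset.mem_filter, Finset.mem_sdiff]

private lemma mem_Succ' {G : Pos α} {x z : α} :
    z ∈ G.Succ x ↔ z ∈ G.V ∧ Relation.ReflTransGen (fun a b => (a, b) ∈ G.A) x z := by
  simp [Pos.Succ, Finset.mem_filter]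

private lemma mem_Pred' {G : Pos α} {y z : α} :
    z ∈ G.Pred y ↔ z ∈ G.V ∧ Relation.ReflTransGen (fun a b => (a, b) ∈ G.A) z y := by
  simp [Pos.Pred, Finset.mem_filter]

private lemma mem_ForcL' {G : Pos α} {x : α} :
    x ∈ G.ForcL ↔ x ∈ G.left ∧ G.Succ x ⊆ G.left := by
  simp [Pos.ForcL, Finset.mem_filter]

private lemma mem_ForcR' {G : Pos α} {y : α} :
    y ∈ G.ForcR ↔ y ∈ G.R ∧ G.Pred y ⊆ G.R := by
  simp [Pos.ForcR, Finset.mem_filter]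

set_option linter.unusedSectionVars false in
private lemma rtg_closed {r : α → α → Prop} {T : Finset α}
    (hT : ∀ a b, a ∈ T → r a b → b ∈ T) {a b : α} (h : Relation.ReflTransGen r a b)
    (ha : a ∈ T) : b ∈ T := by
  induction h with
  | refl => exact ha
  | tail _ h ih => exact hT _ _ ih h

/-- If a Left-forced vertex of `G ∖ S` has an out-neighbour outside `S`, that
neighbour is Left-forced too. -/
private lemma forcL_closed {G : Pos α} (hwf : G.WF) (S : Finset α)
    {a b : α} (ha : a ∈ (G.erase S).ForcL) (hab : (a, b) ∈ G.A) (hbS : b ∉ S) :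
    b ∈ (G.erase S).ForcL := by
  rw [mem_ForcL'] at ha ⊢
  obtain ⟨haL, hsub⟩ := ha
  have haL' : a ∈ G.left \ S := haL
  have haV : a ∈ G.V := (hwf.1 _ hab).1
  have hbV : b ∈ G.V := (hwf.1 _ hab).2
  have haS : a ∉ S := (Finset.mem_sdiff.mp haL').2
  have habH : (a, b) ∈ (G.erase S).A := mem_erase_A.mpr ⟨hab, ⟨haV, haS⟩, ⟨hbV, hbS⟩⟩
  have hbV' : b ∈ (G.erase S).V := Finset.mem_sdiff.mpr ⟨hbV, hbS⟩
  have hbSucc : b ∈ (G.erase S).Succ a :=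
    mem_Succ'.mpr ⟨hbV', Relation.ReflTransGen.single habH⟩
  refine ⟨hsub hbSucc, fun z hz => ?_⟩
  rw [mem_Succ'] at hz
  exact hsub (mem_Succ'.mpr ⟨hz.1, (Relation.ReflTransGen.single habH).trans hz.2⟩)

/-- If a Right-forced vertex of `G ∖ S` has an in-neighbour outside `S`, that
neighbour is Right-forced too. -/
private lemma forcR_closed {G : Pos α} (hwf : G.WF) (S : Finset α)
    {a b : α} (hb : b ∈ (G.erase S).ForcR) (hab : (a, b) ∈ G.A) (haS : a ∉ S) :
    a ∈ (G.erase S).ForcR := by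
  rw [mem_ForcR'] at hb ⊢
  obtain ⟨hbR, hsub⟩ := hb
  have hbV' : b ∈ (G.erase S).V := (Finset.mem_sdiff.mp hbR).1
  have hbV : b ∈ G.V := (Finset.mem_sdiff.mp hbV').1
  have hbS : b ∉ S := (Finset.mem_sdiff.mp hbV').2
  have haV : a ∈ G.V := (hwf.1 _ hab).1
  have habH : (a, b) ∈ (G.erase S).A := mem_erase_A.mpr ⟨hab, ⟨haV, haS⟩, ⟨hbV, hbS⟩⟩
  have haV' : a ∈ (G.erase S).V := Finset.mem_sdiff.mpr ⟨haV, haS⟩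
  have haPred : a ∈ (G.erase S).Pred b :=
    mem_Pred'.mpr ⟨haV', Relation.ReflTransGen.single habH⟩
  refine ⟨hsub haPred, fun z hz => ?_⟩
  rw [mem_Pred'] at hz
  exact hsub (mem_Pred'.mpr ⟨hz.1, hz.2.trans (Relation.ReflTransGen.single habH)⟩)

/-- A path in `G` between two vertices surviving the removal of `R0` stays inside
`G ∖ R0`, provided `R0` contains a successor-closed "trap" `T` that absorbs any arc
entering `R0` from outside. -/
private lemma stay (G : Pos α) (hwf : G.WF)
    (R0 T : Finset α) (hT : T ⊆ R0)
    (hTc : ∀ a b, a ∈ T → (a, b) ∈ G.A → b ∈ T)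
    (hin : ∀ a b, a ∉ R0 → (a, b) ∈ G.A → b ∈ R0 → b ∈ T)
    {v z : α} (hz : z ∉ R0)
    (h : Relation.ReflTransGen (fun a b => (a, b) ∈ G.A) v z) (hv : v ∉ R0) :
    Relation.ReflTransGen (fun a b => (a, b) ∈ (G.erase R0).A) v z := by
  revert hv
  induction h using Relation.ReflTransGen.head_induction_on with
  | refl => exact fun _ => .refl
  | head hac hcz ih =>
    rename_i a c
    intro ha
    by_cases hc : c ∈ R0
    · have hcT := hin a c ha hac hc
      have hzT : z ∈ T := rtg_closed hTc hcz hcT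
      exact absurd (hT hzT) hz
    · exact (ih hc).head (mem_erase_A.mpr ⟨hac, ⟨(hwf.1 _ hac).1, ha⟩, ⟨(hwf.1 _ hac).2, hc⟩⟩)

end Aux

/-- evolution of successors and predecessors after a move. -/
theorem influence_succ_pred_move {α : Type} [DecidableEq α] (G : Pos α)
    (hwf : G.WF) (hrel : G.Relevant) (u v : α)
    (hu : u ∈ G.V) (hv : v ∈ (G.move u).V) :
    (G.move u).Succ v = G.Succ v ∩ (G.move u).V ∧
    (G.move u).Pred v = G.Pred v ∩ (G.move u).V := by
  classical
  -- A successor-closed "trap" `T` inside `Rmv G u` absorbing every arc that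
  -- enters `Rmv G u` from outside.
  obtain ⟨T, hT, hTc, hin⟩ :
      ∃ T : Finset α, T ⊆ G.Rmv u ∧ (∀ a b, a ∈ T → (a, b) ∈ G.A → b ∈ T) ∧
        (∀ a b, a ∉ G.Rmv u → (a, b) ∈ G.A → b ∈ G.Rmv u → b ∈ T) := by
    by_cases huL : u ∈ G.left
    · have hR0 : G.Rmv u = G.Succ u ∪ (G.erase (G.Succ u)).Forc := by
        rw [Pos.Rmv, if_pos huL]
      refine ⟨G.Succ u ∪ (G.erase (G.Succ u)).ForcL, ?_, ?_, ?_⟩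
      · rw [hR0]
        exact Finset.union_subset_union_right Finset.subset_union_left
      · rintro a b haT hab
        rcases Finset.mem_union.mp haT with h | h
        · exact Finset.mem_union_left _
            (mem_Succ'.mpr ⟨(hwf.1 _ hab).2, (mem_Succ'.mp h).2.tail hab⟩)
        · by_cases hbS : b ∈ G.Succ u
          · exact Finset.mem_union_left _ hbS
          · exact Finset.mem_union_right _ (forcL_closed hwf _ h hab hbS)
      · intro a b haR hab hbR
        have haS : a ∉ G.Succ u := fun h => haR (hR0 ▸ Finset.mem_union_left _ h)
        rw [hR0, Finset.mem_union, Pos.Forc, Finset.mem_union] at hbR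
        rcases hbR with h | h | h
        · exact Finset.mem_union_left _ h
        · exact Finset.mem_union_right _ h
        · exact absurd
            (hR0 ▸ Finset.mem_union_right _
              (Finset.mem_union_right _ (forcR_closed hwf _ h hab haS)) : a ∈ G.Rmv u) haR
    · have hR0 : G.Rmv u = G.Pred u ∪ (G.erase (G.Pred u)).Forc := by
        rw [Pos.Rmv, if_neg huL]
      refine ⟨(G.erase (G.Pred u)).ForcL, ?_, ?_, ?_⟩
      · intro x hx
        rw [hR0]
        exact Finset.mem_union_right _ (Finset.mem_union_left _ hx)
      · intro a b haT hab
        have haL : a ∈ G.left \ G.Pred u := (mem_ForcL'.mp haT).1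
        have haS : a ∉ G.Pred u := (Finset.mem_sdiff.mp haL).2
        have hbS : b ∉ G.Pred u := fun hb => haS
          (mem_Pred'.mpr ⟨(hwf.1 _ hab).1, Relation.ReflTransGen.head hab (mem_Pred'.mp hb).2⟩)
        exact forcL_closed hwf _ haT hab hbS
      · intro a b haR hab hbR
        have haS : a ∉ G.Pred u := fun h => haR (hR0 ▸ Finset.mem_union_left _ h)
        rw [hR0, Finset.mem_union, Pos.Forc, Finset.mem_union] at hbR
        rcases hbR with h | h | h
        · exact absurd
            (mem_Pred'.mpr ⟨(hwf.1 _ hab).1,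
              Relation.ReflTransGen.head hab (mem_Pred'.mp h).2⟩) haS
        · exact h
        · exact absurd
            (hR0 ▸ Finset.mem_union_right _
              (Finset.mem_union_right _ (forcR_closed hwf _ h hab haS)) : a ∈ G.Rmv u) haR
  have hAsub : ∀ {a b : α}, (a, b) ∈ (G.move u).A → (a, b) ∈ G.A :=
    fun h => (mem_erase_A.mp h).1
  have hvR : v ∉ G.Rmv u := (Finset.mem_sdiff.mp hv).2
  constructor
  · ext z
    constructor
    · intro hz
      rw [mem_Succ'] at hz
      have hzV : z ∈ G.V := (Finset.mem_sdiff.mp hz.1).1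
      exact Finset.mem_inter.mpr
        ⟨mem_Succ'.mpr ⟨hzV, Relation.ReflTransGen.mono (p := fun a b => (a, b) ∈ G.A) (fun a b h => hAsub h) v z hz.2⟩, hz.1⟩
    · intro hz
      obtain ⟨hz1, hz2⟩ := Finset.mem_inter.mp hz
      rw [mem_Succ'] at hz1
      have hzR : z ∉ G.Rmv u := (Finset.mem_sdiff.mp hz2).2
      exact mem_Succ'.mpr ⟨hz2, stay G hwf _ T hT hTc hin hzR hz1.2 hvR⟩
  · ext z
    constructor
    · intro hz
      rw [mem_Pred'] at hz
      have hzV : z ∈ G.V := (Finset.mem_sdiff.mp hz.1).1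
      exact Finset.mem_inter.mpr
        ⟨mem_Pred'.mpr ⟨hzV, Relation.ReflTransGen.mono (p := fun a b => (a, b) ∈ G.A) (fun a b h => hAsub h) z v hz.2⟩, hz.1⟩
    · intro hz
      obtain ⟨hz1, hz2⟩ := Finset.mem_inter.mp hz
      rw [mem_Pred'] at hz1
      have hzR : z ∉ G.Rmv u := (Finset.mem_sdiff.mp hz2).2
      exact mem_Pred'.mpr ⟨hz2, stay G hwf _ T hT hTc hin hvR hz1.2 hzR⟩
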